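/- arXiv:1007.2109 — 4 statements merged into one kernel-verified Lean document; each statement's English description precedes it below -/
import Mathlib

section
/- For every real α ∈ (0,2), and every real v, we have |v|^α = (Γ(α+1) sin(πα/2)/π) ∫_ℝ (1 - cos(ωv)) / |ω|^(α+1) dω. -/
open Real MeasureTheory

open Set Filter Topology

lemma laplace_one_sub_cos {t : ℝ} (ht : 0 < t) :
    ∫ u in Ioi (0:ℝ), (1 - Real.cos u) * Real.exp (-(t*u)) = 1/(t*(1+t^2)) := by
  have h1t : (1:ℝ) + t^2 ≠ 0 := by positivity
  set F : ℝ → ℝ := fun u => -Real.exp (-(t*u))/t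
      - Real.exp (-(t*u)) * (Real.sin u - t * Real.cos u) / (1+t^2) with hF
  have hderiv : ∀ u ∈ Ici (0:ℝ), HasDerivAt F ((1 - Real.cos u) * Real.exp (-(t*u))) u := by
    intro u _
    have he : HasDerivAt (fun u : ℝ => Real.exp (-(t*u))) (Real.exp (-(t*u)) * (-t)) u := by
      have : HasDerivAt (fun u : ℝ => -(t*u)) (-t) u := by
        have := ((hasDerivAt_id' u).const_mul t).neg; rw [mul_one] at this; exact this
      exact this.exp
    have hs : HasDerivAt (fun u : ℝ => Real.sin u - t * Real.cos u)
        (Real.cos u + t * Real.sin u) u := by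
      have := (Real.hasDerivAt_sin u).sub ((Real.hasDerivAt_cos u).const_mul t)
      rw [show (Real.cos u - t * -Real.sin u) = Real.cos u + t * Real.sin u by ring] at this; exact this
    have := ((he.neg.div_const t).sub (((he.mul hs)).div_const (1+t^2)))
    refine this.congr_deriv ?_
    field_simp
    ring
  have hint : IntegrableOn (fun u => (1 - Real.cos u) * Real.exp (-(t*u))) (Ioi 0) := by
    refine Integrable.mono' ((exp_neg_integrableOn_Ioi 0 ht).const_mul 2) ?_ ?_
    · exact ((continuous_const.sub Real.continuous_cos).mul
        (Real.continuous_exp.comp (continuous_const.mul continuous_id).neg)).aestronglyMeasurable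
    · refine ae_of_all _ fun u => ?_
      have h2 : |1 - Real.cos u| ≤ 2 := by
        have := Real.neg_one_le_cos u
        have := Real.cos_le_one u
        rw [abs_le]; constructor <;> linarith
      have he : (0:ℝ) < Real.exp (-(t*u)) := Real.exp_pos _
      calc ‖(1 - Real.cos u) * Real.exp (-(t*u))‖
          = |1 - Real.cos u| * Real.exp (-(t*u)) := by
            rw [norm_mul, Real.norm_eq_abs, Real.norm_eq_abs, abs_of_pos he]
        _ ≤ 2 * Real.exp (-(t*u)) := by
            exact mul_le_mul_of_nonneg_right h2 he.le
        _ = 2 * Real.exp (-t*u) := by rw [neg_mul]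
  have htend : Tendsto F atTop (𝓝 0) := by
    have hb : Tendsto (fun u : ℝ => Real.exp (-(t*u))) atTop (𝓝 0) := by
      have : Tendsto (fun u : ℝ => t * u) atTop atTop :=
        Tendsto.const_mul_atTop ht tendsto_id
      exact Real.tendsto_exp_neg_atTop_nhds_zero.comp this
    have hM : Tendsto (fun u : ℝ => (1/t + (1+t)/(1+t^2)) * Real.exp (-(t*u))) atTop (𝓝 0) := by
      simpa using hb.const_mul (1/t + (1+t)/(1+t^2))
    refine squeeze_zero_norm (fun u => ?_) hM
    have he : (0:ℝ) < Real.exp (-(t*u)) := Real.exp_pos _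
    have hsc : |Real.sin u - t * Real.cos u| ≤ 1 + t := by
      calc |Real.sin u - t * Real.cos u| ≤ |Real.sin u| + |t * Real.cos u| := abs_sub _ _
        _ ≤ 1 + t := by
            have h1 := Real.abs_sin_le_one u
            have h2 : |t * Real.cos u| ≤ t := by
              rw [abs_mul, abs_of_pos ht]
              nlinarith [Real.abs_cos_le_one u]
            linarith
    calc ‖F u‖ ≤ ‖-Real.exp (-(t*u))/t‖ + ‖Real.exp (-(t*u)) * (Real.sin u - t * Real.cos u) / (1+t^2)‖ :=
          norm_sub_le _ _
      _ ≤ Real.exp (-(t*u))/t + Real.exp (-(t*u)) * (1+t)/(1+t^2) := by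
          rw [norm_div, norm_div, norm_neg, norm_mul]
          simp only [Real.norm_eq_abs]
          rw [abs_of_pos he, abs_of_pos ht, abs_of_pos (show (0:ℝ) < 1 + t^2 by positivity)]
          gcongr
      _ = (1/t + (1+t)/(1+t^2)) * Real.exp (-(t*u)) := by ring
  have := integral_Ioi_of_hasDerivAt_of_tendsto' hderiv hint htend
  rw [this, hF]
  simp only [mul_zero, neg_zero, Real.exp_zero, Real.sin_zero, Real.cos_zero]
  field_simp
  ring

lemma integrableOn_rpow_div_one_add_sq {β : ℝ} (h1 : -1 < β) (h2 : β < 1) :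
    IntegrableOn (fun t : ℝ => t^β/(1+t^2)) (Ioi 0) := by
  have hcont : ContinuousOn (fun t : ℝ => t^β/(1+t^2)) (Ioi 0) := by
    intro t ht
    exact ((Real.continuousAt_rpow_const t β (Or.inl (ne_of_gt ht))).div
      (Continuous.continuousAt (by continuity)) (by positivity)).continuousWithinAt
  rw [← Ioc_union_Ioi_eq_Ioi (zero_le_one)]
  refine IntegrableOn.union ?_ ?_
  · refine Integrable.mono' ((intervalIntegrable_iff_integrableOn_Ioc_of_le zero_le_one).mp
      (intervalIntegral.intervalIntegrable_rpow' h1))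
      ((hcont.mono Ioc_subset_Ioi_self).aestronglyMeasurable measurableSet_Ioc) ?_
    rw [ae_restrict_iff' measurableSet_Ioc]
    refine ae_of_all _ fun t ht => ?_
    have ht0 : 0 < t := ht.1
    rw [Real.norm_eq_abs, abs_div, abs_of_nonneg (Real.rpow_nonneg ht0.le β),
      abs_of_pos (show (0:ℝ) < 1 + t^2 by positivity)]
    calc t^β/(1+t^2) ≤ t^β/1 := by
          gcongr
          nlinarith
      _ = t^β := div_one _
  · refine Integrable.mono' (integrableOn_Ioi_rpow_of_lt (show β - 2 < -1 by linarith) one_pos)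
      ((hcont.mono (Ioi_subset_Ioi zero_le_one)).aestronglyMeasurable measurableSet_Ioi) ?_
    rw [ae_restrict_iff' measurableSet_Ioi]
    refine ae_of_all _ fun t ht => ?_
    have ht0 : (0:ℝ) < t := lt_trans one_pos ht
    rw [Real.norm_eq_abs, abs_div, abs_of_nonneg (Real.rpow_nonneg ht0.le β),
      abs_of_pos (show (0:ℝ) < 1 + t^2 by positivity)]
    have h : t^(β-2) = t^β / t^2 := by
      rw [Real.rpow_sub ht0, Real.rpow_two]
    rw [h]
    gcongr
    nlinarith

lemma inner_eval {α : ℝ} {t : ℝ} (ht : 0 < t) :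
    ∫ u in Ioi (0:ℝ), (1 - Real.cos u) * (t^α * Real.exp (-(u*t))) = t^(α-1)/(1+t^2) := by
  have h := laplace_one_sub_cos ht
  calc ∫ u in Ioi (0:ℝ), (1 - Real.cos u) * (t^α * Real.exp (-(u*t)))
      = ∫ u in Ioi (0:ℝ), t^α * ((1 - Real.cos u) * Real.exp (-(t*u))) := by
        refine setIntegral_congr_fun measurableSet_Ioi fun u _ => ?_
        rw [mul_comm u t]; ring
    _ = t^α * ∫ u in Ioi (0:ℝ), (1 - Real.cos u) * Real.exp (-(t*u)) := integral_const_mul _ _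
    _ = t^α * (1/(t*(1+t^2))) := by rw [h]
    _ = t^(α-1)/(1+t^2) := by
        rw [Real.rpow_sub ht, Real.rpow_one]
        field_simp

lemma fubini1 {α : ℝ} (hα : α ∈ Ioo (0:ℝ) 2) :
    Real.Gamma (α+1) * ∫ u in Ioi (0:ℝ), (1 - Real.cos u)/u^(α+1)
      = ∫ t in Ioi (0:ℝ), t^(α-1)/(1+t^2) := by
  obtain ⟨hα0, hα2⟩ := hα
  set μ : Measure ℝ := volume.restrict (Ioi 0) with hμ
  set f : ℝ → ℝ → ℝ := fun u t => (1 - Real.cos u) * (t^α * Real.exp (-(u*t))) with hf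
  have hrpow_cont : Continuous fun x : ℝ => x ^ α :=
    continuous_iff_continuousAt.mpr fun x => Real.continuousAt_rpow_const x α (Or.inr hα0.le)
  have hmeas : AEStronglyMeasurable (Function.uncurry f) (μ.prod μ) := by
    refine Continuous.aestronglyMeasurable ?_
    exact ((continuous_const.sub (Real.continuous_cos.comp continuous_fst))).mul
      ((hrpow_cont.comp continuous_snd).mul
        (Real.continuous_exp.comp (continuous_fst.mul continuous_snd).neg))
  have hnorm : ∀ t ∈ Ioi (0:ℝ), (∫ u, ‖f u t‖ ∂μ) = t^(α-1)/(1+t^2) := by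
    intro t ht
    have ht' : (0:ℝ) < t := ht
    rw [show (∫ u, ‖f u t‖ ∂μ) = ∫ u in Ioi (0:ℝ), f u t from ?_]
    · exact inner_eval ht
    refine setIntegral_congr_fun measurableSet_Ioi fun u _ => ?_
    have h1 : 0 ≤ 1 - Real.cos u := by nlinarith [Real.cos_le_one u]
    have h2 : 0 ≤ t^α * Real.exp (-(u*t)) :=
      mul_nonneg (Real.rpow_nonneg ht'.le α) (Real.exp_pos _).le
    rw [Real.norm_eq_abs, abs_of_nonneg (mul_nonneg h1 h2)]
  have hint : Integrable (Function.uncurry f) (μ.prod μ) := by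
    rw [integrable_prod_iff' hmeas]
    constructor
    · filter_upwards [self_mem_ae_restrict measurableSet_Ioi] with t ht
      have ht' : (0:ℝ) < t := ht
      refine Integrable.mono' ((exp_neg_integrableOn_Ioi 0 ht').const_mul (2*t^α)) ?_ ?_
      · refine Continuous.aestronglyMeasurable ?_
        show Continuous fun u : ℝ => (1 - Real.cos u) * (t^α * Real.exp (-(u*t)))
        exact (continuous_const.sub Real.continuous_cos).mul
          (continuous_const.mul (Real.continuous_exp.comp (continuous_id.mul continuous_const).neg))
      · refine ae_of_all _ fun u => ?_
        show ‖f u t‖ ≤ 2*t^α * Real.exp (-t*u)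
        have h2 : |1 - Real.cos u| ≤ 2 := by
          have := Real.neg_one_le_cos u
          have := Real.cos_le_one u
          rw [abs_le]; constructor <;> linarith
        have hepos : (0:ℝ) < Real.exp (-(u*t)) := Real.exp_pos _
        have htα : (0:ℝ) ≤ t^α := Real.rpow_nonneg ht'.le α
        calc ‖f u t‖ = |1 - Real.cos u| * (t^α * Real.exp (-(u*t))) := by
              rw [hf]; simp only [Real.norm_eq_abs, abs_mul]
              rw [abs_of_nonneg htα, abs_of_pos hepos]
          _ ≤ 2 * (t^α * Real.exp (-(u*t))) := by
              exact mul_le_mul_of_nonneg_right h2 (by positivity)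
          _ = 2*t^α * Real.exp (-t*u) := by rw [neg_mul, mul_comm u t]; ring
    · refine Integrable.congr
        (integrableOn_rpow_div_one_add_sq (β := α-1) (by linarith) (by linarith)) ?_
      filter_upwards [self_mem_ae_restrict measurableSet_Ioi] with t ht
      exact (hnorm t ht).symm
  calc Real.Gamma (α+1) * ∫ u in Ioi (0:ℝ), (1 - Real.cos u)/u^(α+1)
      = ∫ u in Ioi (0:ℝ), Real.Gamma (α+1) * ((1 - Real.cos u)/u^(α+1)) :=
        (integral_const_mul _ _).symm
    _ = ∫ u in Ioi (0:ℝ), ∫ t, f u t ∂μ := by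
        refine setIntegral_congr_fun measurableSet_Ioi fun u hu => ?_
        have hu0 : (0:ℝ) < u := hu
        have key := Real.integral_rpow_mul_exp_neg_mul_Ioi
          (show (0:ℝ) < α + 1 by linarith) hu0
        have h1 : (∫ t, f u t ∂μ) = (1 - Real.cos u) * ∫ t in Ioi (0:ℝ),
            t^α * Real.exp (-(u*t)) := by
          rw [hμ, ← integral_const_mul]
        rw [h1, show (∫ t in Ioi (0:ℝ), t^α * Real.exp (-(u*t)))
            = (1/u)^(α+1) * Real.Gamma (α+1) from ?_]
        · rw [Real.div_rpow zero_le_one hu0.le, Real.one_rpow]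
          ring
        · rw [← key]
          refine setIntegral_congr_fun measurableSet_Ioi fun t _ => ?_
          rw [add_sub_cancel_right]
    _ = ∫ t, ∫ u, f u t ∂μ ∂μ := integral_integral_swap hint
    _ = ∫ t in Ioi (0:ℝ), t^(α-1)/(1+t^2) := by
        refine setIntegral_congr_fun measurableSet_Ioi fun t ht => ?_
        exact inner_eval ht

lemma mellin_one_div_one_add {s : ℝ} (h0 : 0 < s) (h1 : s < 1) :
    ∫ x in Ioi (0:ℝ), x^(s-1)/(1+x) = π / Real.sin (π * s) := by
  set μ : Measure ℝ := volume.restrict (Ioi 0) with hμ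
  set f : ℝ → ℝ → ℝ := fun x u => x^(s-1) * Real.exp (-((1+x)*u)) with hf
  -- inner integral over u, for x > 0
  have hstep1 : ∀ x ∈ Ioi (0:ℝ), (∫ u, f x u ∂μ) = x^(s-1)/(1+x) := by
    intro x hx
    have hx0 : (0:ℝ) < x := hx
    have h1x : (0:ℝ) < 1 + x := by linarith
    have key := Real.integral_rpow_mul_exp_neg_mul_Ioi one_pos h1x
    have : (∫ u in Ioi (0:ℝ), Real.exp (-((1+x)*u))) = 1/(1+x) := by
      rw [show (1:ℝ)/(1+x) = (1/(1+x))^(1:ℝ) * Real.Gamma 1 by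
        rw [Real.Gamma_one, Real.rpow_one, mul_one], ← key]
      refine setIntegral_congr_fun measurableSet_Ioi fun u _ => ?_
      norm_num
    rw [hμ, hf]
    simp only
    rw [integral_const_mul, this]
    ring
  -- inner integral over x, for u > 0
  have hstep3 : ∀ u ∈ Ioi (0:ℝ), (∫ x, f x u ∂μ)
      = Real.Gamma s * (Real.exp (-u) * u^((1-s)-1)) := by
    intro u hu
    have hu0 : (0:ℝ) < u := hu
    have key := Real.integral_rpow_mul_exp_neg_mul_Ioi h0 hu0
    have heq : (∫ x, f x u ∂μ) = Real.exp (-u) * ∫ x in Ioi (0:ℝ),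
        x^(s-1) * Real.exp (-(u*x)) := by
      rw [hμ, ← integral_const_mul]
      refine setIntegral_congr_fun measurableSet_Ioi fun x _ => ?_
      rw [hf]
      simp only
      rw [show -((1+x)*u) = -u + -(u*x) by ring, Real.exp_add]
      ring
    rw [heq, key]
    rw [Real.div_rpow zero_le_one hu0.le, Real.one_rpow,
      show (1-s)-1 = -s by ring, Real.rpow_neg hu0.le]
    ring
  -- integrability for a.e. u of x ↦ f x u
  have hxint : ∀ u : ℝ, 0 < u → Integrable (fun x => f x u) μ := by
    intro u hu
    have base := integrableOn_rpow_mul_exp_neg_mul_rpow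
      (show (-1:ℝ) < s-1 by linarith) (p := 1) one_pos hu
    have base' : IntegrableOn (fun x : ℝ => x^(s-1) * Real.exp (-(u*x))) (Ioi 0) := by
      refine base.congr_fun (fun x hx => ?_) measurableSet_Ioi
      dsimp only; rw [Real.rpow_one, neg_mul]
    have := (base'.const_mul (Real.exp (-u)))
    refine this.congr ?_
    refine Eventually.of_forall fun x => ?_
    rw [hf]
    simp only
    rw [show -((1+x)*u) = -u + -(u*x) by ring, Real.exp_add]
    ring
  -- measurability on the product
  have hmeas : AEStronglyMeasurable (Function.uncurry f) (μ.prod μ) := by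
    refine Measurable.aestronglyMeasurable ?_
    show Measurable fun p : ℝ × ℝ => (p.1)^(s-1) * Real.exp (-((1+p.1)*p.2))
    fun_prop
  have hint : Integrable (Function.uncurry f) (μ.prod μ) := by
    rw [integrable_prod_iff hmeas]
    constructor
    · filter_upwards [self_mem_ae_restrict measurableSet_Ioi] with x hx
      -- u ↦ f x u integrable
      have hx0 : (0:ℝ) < x := hx
      have h1x : (0:ℝ) < 1 + x := by linarith
      exact ((exp_neg_integrableOn_Ioi 0 h1x).const_mul (x^(s-1))).congr
        (Eventually.of_forall fun u => by
          simp only [Function.uncurry_apply_pair, hf, neg_mul])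
    · -- x ↦ ∫ ‖f x u‖ du integrable
      refine Integrable.congr (f := fun x : ℝ => x^(s-1)/(1+x)) ?_ ?_
      · -- integrability of x^(s-1)/(1+x) on Ioi 0
        have hcont : ContinuousOn (fun x : ℝ => x^(s-1)/(1+x)) (Ioi 0) := by
          intro x hx
          have hx0 : (0:ℝ) < x := hx
          exact ((Real.continuousAt_rpow_const x (s-1) (Or.inl hx0.ne')).div
            (Continuous.continuousAt (by continuity)) (by positivity)).continuousWithinAt
        rw [show μ = volume.restrict (Ioi 0) from hμ, ← Ioc_union_Ioi_eq_Ioi (zero_le_one)]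
        refine IntegrableOn.union ?_ ?_
        · refine Integrable.mono' ((intervalIntegrable_iff_integrableOn_Ioc_of_le zero_le_one).mp
            (intervalIntegral.intervalIntegrable_rpow' (show (-1:ℝ) < s-1 by linarith)))
            ((hcont.mono Ioc_subset_Ioi_self).aestronglyMeasurable measurableSet_Ioc) ?_
          rw [ae_restrict_iff' measurableSet_Ioc]
          refine ae_of_all _ fun x hx => ?_
          have hx0 : 0 < x := hx.1
          rw [Real.norm_eq_abs, abs_div, abs_of_nonneg (Real.rpow_nonneg hx0.le _),
            abs_of_pos (show (0:ℝ) < 1 + x by linarith)]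
          calc x^(s-1)/(1+x) ≤ x^(s-1)/1 := by
                gcongr
                linarith
            _ = x^(s-1) := div_one _
        · refine Integrable.mono' (integrableOn_Ioi_rpow_of_lt
              (show s-1-1 < -1 by linarith) one_pos)
            ((hcont.mono (Ioi_subset_Ioi zero_le_one)).aestronglyMeasurable measurableSet_Ioi) ?_
          rw [ae_restrict_iff' measurableSet_Ioi]
          refine ae_of_all _ fun x hx => ?_
          have hx0 : (0:ℝ) < x := lt_trans one_pos hx
          rw [Real.norm_eq_abs, abs_div, abs_of_nonneg (Real.rpow_nonneg hx0.le _),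
            abs_of_pos (show (0:ℝ) < 1 + x by linarith)]
          have h : x^(s-1-1) = x^(s-1) / x := by
            rw [Real.rpow_sub hx0, Real.rpow_one]
          rw [h]
          gcongr
          linarith
      · filter_upwards [self_mem_ae_restrict measurableSet_Ioi] with x hx
        have hx0 : (0:ℝ) < x := hx
        rw [← hstep1 x hx]
        refine integral_congr_ae ?_
        refine Eventually.of_forall fun u => ?_
        have : (0:ℝ) ≤ f x u := by
          rw [hf]
          exact mul_nonneg (Real.rpow_nonneg hx0.le _) (Real.exp_pos _).le
        show f x u = ‖Function.uncurry f (x, u)‖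
        rw [Function.uncurry_apply_pair, Real.norm_eq_abs, abs_of_nonneg this]
  calc ∫ x in Ioi (0:ℝ), x^(s-1)/(1+x)
      = ∫ x, ∫ u, f x u ∂μ ∂μ := by
        refine setIntegral_congr_fun measurableSet_Ioi fun x hx => ?_
        exact (hstep1 x hx).symm
    _ = ∫ u, ∫ x, f x u ∂μ ∂μ := integral_integral_swap hint
    _ = ∫ u in Ioi (0:ℝ), Real.Gamma s * (Real.exp (-u) * u^((1-s)-1)) := by
        refine setIntegral_congr_fun measurableSet_Ioi fun u hu => ?_
        exact hstep3 u hu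
    _ = Real.Gamma s * Real.Gamma (1-s) := by
        rw [integral_const_mul, Real.Gamma_eq_integral (by linarith : (0:ℝ) < 1-s)]
    _ = π / Real.sin (π * s) := Real.Gamma_mul_Gamma_one_sub s

lemma key_const {α : ℝ} (hα : α ∈ Ioo (0:ℝ) 2) :
    Real.Gamma (α+1) * ∫ u in Ioi (0:ℝ), (1 - Real.cos u)/u^(α+1)
      = π / (2 * Real.sin (π * α / 2)) := by
  obtain ⟨hα0, hα2⟩ := hα
  have hsub := integral_comp_rpow_Ioi_of_pos
    (g := fun y : ℝ => y^(α/2-1)/(1+y)) (p := 2) two_pos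
  have hhalf : ∫ t in Ioi (0:ℝ), t^(α-1)/(1+t^2)
      = (1/2) * ∫ y in Ioi (0:ℝ), y^(α/2-1)/(1+y) := by
    rw [← hsub, ← integral_const_mul]
    refine setIntegral_congr_fun measurableSet_Ioi fun x hx => ?_
    have hx0 : (0:ℝ) < x := hx
    have e1 : x ^ ((2:ℝ)-1) = x := by
      norm_num
    have e2 : (x ^ (2:ℝ)) ^ (α/2-1) = x ^ (α-2) := by
      rw [← Real.rpow_mul hx0.le]

      ring_nf
    have e3 : x ^ (2:ℝ) = x^2 := by
      rw [show (2:ℝ) = ((2:ℕ):ℝ) by norm_num, Real.rpow_natCast]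
    have e4 : x * x ^ (α-2) = x ^ (α-1) := by
      rw [show α - 1 = (α-2) + 1 by ring, Real.rpow_add_one hx0.ne']
      ring
    simp only [smul_eq_mul]
    rw [e1, e2, e3]
    rw [← e4]
    ring
  rw [fubini1 ⟨hα0, hα2⟩, hhalf,
    mellin_one_div_one_add (by linarith) (by linarith),
    show π * (α/2) = π * α / 2 by ring]
  ring

theorem vonBahrEssen_abs_rpow (α : ℝ) (hα : α ∈ Set.Ioo (0:ℝ) 2) (v : ℝ) :
    |v| ^ α = (Real.Gamma (α + 1) * Real.sin (π * α / 2) / π) *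
      ∫ ω : ℝ, (1 - Real.cos (ω * v)) / |ω| ^ (α + 1) := by
  obtain ⟨hα0, hα2⟩ := hα
  rcases eq_or_ne v 0 with rfl | hv
  · simp [Real.zero_rpow hα0.ne']
  have habs : 0 < |v| := abs_pos.mpr hv
  have hsin : 0 < Real.sin (π * α / 2) := by
    apply Real.sin_pos_of_pos_of_lt_pi
    · have := Real.pi_pos; positivity
    · have := Real.pi_pos; nlinarith
  -- scaling
  have hcomp := MeasureTheory.Measure.integral_comp_mul_left
    (fun ω : ℝ => (1 - Real.cos ω) / |ω| ^ (α+1)) v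
  have hscale : (∫ ω : ℝ, (1 - Real.cos (ω * v)) / |ω| ^ (α + 1))
      = |v| ^ α * ∫ ω : ℝ, (1 - Real.cos ω) / |ω| ^ (α+1) := by
    have hpt : ∀ x : ℝ, (1 - Real.cos (x * v)) / |x| ^ (α+1)
        = |v|^(α+1) * ((1 - Real.cos (v*x)) / |v*x| ^ (α+1)) := by
      intro x
      rcases eq_or_ne x 0 with rfl | hx
      · simp
      · have hxa : (0:ℝ) < |x| := abs_pos.mpr hx
        rw [abs_mul, Real.mul_rpow habs.le hxa.le, mul_comm x v]
        have h1 : |v|^(α+1) ≠ 0 := by positivity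
        have h2 : |x|^(α+1) ≠ 0 := by positivity
        field_simp
    calc (∫ ω : ℝ, (1 - Real.cos (ω * v)) / |ω| ^ (α + 1))
        = ∫ ω : ℝ, |v|^(α+1) * ((1 - Real.cos (v*ω)) / |v*ω| ^ (α+1)) := by
          congr 1; funext ω; exact hpt ω
      _ = |v|^(α+1) * ∫ ω : ℝ, (1 - Real.cos (v*ω)) / |v*ω| ^ (α+1) := integral_const_mul _ _
      _ = |v|^(α+1) * (|v⁻¹| • ∫ ω : ℝ, (1 - Real.cos ω) / |ω| ^ (α+1)) := by rw [hcomp]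
      _ = |v| ^ α * ∫ ω : ℝ, (1 - Real.cos ω) / |ω| ^ (α+1) := by
          rw [smul_eq_mul, abs_inv, ← mul_assoc]
          congr 1
          rw [show α + 1 = α + 1 by rfl, Real.rpow_add habs, Real.rpow_one]
          field_simp
  -- evenness
  have heven : (∫ ω : ℝ, (1 - Real.cos ω) / |ω| ^ (α+1))
      = 2 * ∫ u in Ioi (0:ℝ), (1 - Real.cos u) / u ^ (α+1) := by
    rw [← integral_comp_abs (f := fun u : ℝ => (1 - Real.cos u) / u ^ (α+1))]
    congr 1; funext ω
    rw [Real.cos_abs]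
  rw [hscale, heven]
  have hkey := key_const ⟨hα0, hα2⟩
  have hπ : (π:ℝ) ≠ 0 := Real.pi_ne_zero
  have hs : Real.sin (π * α / 2) ≠ 0 := hsin.ne'
  set J := ∫ u in Ioi (0:ℝ), (1 - Real.cos u) / u ^ (α+1) with hJ
  have h2 : Real.Gamma (α + 1) * Real.sin (π * α / 2) / π * (|v|^α * (2 * J))
      = |v|^α * ((Real.Gamma (α+1) * J) * (2 * Real.sin (π * α / 2) / π)) := by ring
  rw [h2, hkey,
    show π / (2 * Real.sin (π * α / 2)) * (2 * Real.sin (π * α / 2) / π) = 1 from by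
      field_simp, mul_one]
end

section
/- For every real α ∈ (0,1) and every real v, sign(v)|v|^α = (Γ(α+1) cos(πα/2)/π) ∫_ℝ sign(ω) sin(ωv) / |ω|^(α+1) dω. -/
open Real MeasureTheory Set Filter Topology

set_option maxHeartbeats 1000000

set_option maxHeartbeats 1000000

lemma laplace_sin {x : ℝ} (hx : 0 < x) :
    ∫ t in Ioi (0:ℝ), Real.sin t * Real.exp (-(t * x)) = 1 / (1 + x ^ 2) := by
  have h1x : (0:ℝ) < 1 + x ^ 2 := by positivity
  set F : ℝ → ℝ := fun t => -Real.exp (-(t * x)) * (x * Real.sin t + Real.cos t) / (1 + x ^ 2)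
    with hF
  have hderiv : ∀ t ∈ Ici (0:ℝ), HasDerivAt F (Real.sin t * Real.exp (-(t * x))) t := by
    intro t _
    have h1 : HasDerivAt (fun t : ℝ => -(t * x)) (-x) t := by
      convert ((hasDerivAt_id t).mul_const x).neg using 1 <;> first | (ext; simp) | ring
    have h2 : HasDerivAt (fun t : ℝ => Real.exp (-(t * x))) (Real.exp (-(t*x)) * (-x)) t :=
      (Real.hasDerivAt_exp _).comp t h1
    have h3 : HasDerivAt (fun t : ℝ => x * Real.sin t + Real.cos t)
        (x * Real.cos t + (-Real.sin t)) t :=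
      ((Real.hasDerivAt_sin t).const_mul x).add (Real.hasDerivAt_cos t)
    have h4 := ((h2.neg.mul h3).div_const (1 + x ^ 2))
    convert h4 using 1 <;> try rfl
    simp only [Pi.neg_apply]
    field_simp
    ring
  have hint : IntegrableOn (fun t => Real.sin t * Real.exp (-(t * x))) (Ioi (0:ℝ)) := by
    have h : IntegrableOn (fun t : ℝ => Real.exp (-x * t)) (Ioi (0:ℝ)) :=
      exp_neg_integrableOn_Ioi 0 hx
    refine h.mono' ?_ ?_
    · exact (Real.continuous_sin.mul (Real.continuous_exp.comp (by fun_prop))).aestronglyMeasurable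
    · filter_upwards with t
      rw [norm_mul]
      calc ‖Real.sin t‖ * ‖Real.exp (-(t*x))‖ ≤ 1 * ‖Real.exp (-(t*x))‖ := by
            gcongr; exact abs_sin_le_one t
        _ = Real.exp (-x * t) := by
            rw [one_mul, Real.norm_eq_abs, abs_of_pos (Real.exp_pos _)]; ring_nf
  have htend : Tendsto F atTop (𝓝 0) := by
    have hb : Tendsto (fun t : ℝ => Real.exp (-(t * x))) atTop (𝓝 0) := by
      have h1 : Tendsto (fun t : ℝ => t * x) atTop atTop :=
        Tendsto.atTop_mul_const hx tendsto_id
      exact Real.tendsto_exp_neg_atTop_nhds_zero.comp h1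
    have hb2 : Tendsto (fun t : ℝ => (x + 1) / (1 + x ^ 2) * Real.exp (-(t * x)))
        atTop (𝓝 0) := by
      simpa using hb.const_mul ((x + 1) / (1 + x ^ 2))
    refine squeeze_zero_norm (fun t => ?_) hb2
    rw [hF]
    simp only [norm_div, norm_mul, norm_neg, Real.norm_eq_abs,
      abs_of_pos (Real.exp_pos _), abs_of_pos h1x]
    rw [div_le_iff₀ h1x, div_mul_eq_mul_div, div_mul_cancel₀ _ h1x.ne']
    rw [mul_comm ((x+1))]
    gcongr
    calc |x * Real.sin t + Real.cos t| ≤ |x * Real.sin t| + |Real.cos t| := abs_add_le _ _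
      _ ≤ x * 1 + 1 := by
          rw [abs_mul]
          gcongr
          · simp [abs_of_pos hx]
          · exact abs_sin_le_one t
          · exact abs_cos_le_one t
      _ = x + 1 := by ring
  have := integral_Ioi_of_hasDerivAt_of_tendsto' hderiv hint htend
  rw [this, hF]
  norm_num
  rw [neg_div, neg_neg, one_div]

lemma gauss_moment {α : ℝ} (hα : 0 < α) {s : ℝ} (hs : 0 < s) :
    ∫ x in Ioi (0:ℝ), x ^ α * Real.exp (-(s * x ^ 2))
      = Real.Gamma ((α + 1) / 2) * (1 / s) ^ ((α + 1) / 2) / 2 := by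
  have key := integral_comp_rpow_Ioi_of_pos
    (g := fun y : ℝ => y ^ ((α - 1) / 2) * Real.exp (-(s * y))) two_pos
  have hg : ∫ y in Ioi (0:ℝ), y ^ ((α - 1) / 2) * Real.exp (-(s * y))
      = (1 / s) ^ ((α + 1) / 2) * Real.Gamma ((α + 1) / 2) := by
    have h := Real.integral_rpow_mul_exp_neg_mul_Ioi (a := (α + 1) / 2) (by linarith) hs
    rw [show (α + 1) / 2 - 1 = (α - 1) / 2 by ring] at h
    exact h
  have hl : ∫ x in Ioi (0:ℝ), (2 * x ^ ((2:ℝ) - 1)) •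
      ((x ^ (2:ℝ)) ^ ((α - 1) / 2) * Real.exp (-(s * x ^ (2:ℝ))))
      = ∫ x in Ioi (0:ℝ), 2 * (x ^ α * Real.exp (-(s * x ^ 2))) := by
    refine setIntegral_congr_fun measurableSet_Ioi (fun x hx => ?_)
    have hx0 : (0:ℝ) < x := hx
    have e1 : x ^ (2:ℝ) = x ^ (2:ℕ) := by
      rw [← Real.rpow_natCast x 2]; norm_num
    have e2 : (x ^ (2:ℕ)) ^ ((α - 1) / 2) = x ^ (α - 1) := by
      rw [← Real.rpow_natCast x 2, ← Real.rpow_mul hx0.le]; congr 1; push_cast; ring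
    have e3 : x ^ (α - 1) * x = x ^ α := by
      rw [← Real.rpow_add_one hx0.ne' (α - 1)]; norm_num
    rw [smul_eq_mul, e1, e2, show (2:ℝ) - 1 = 1 by norm_num, Real.rpow_one]
    calc 2 * x * (x ^ (α - 1) * Real.exp (-(s * x ^ (2:ℕ))))
        = 2 * (x ^ (α - 1) * x * Real.exp (-(s * x ^ (2:ℕ)))) := by ring
      _ = 2 * (x ^ α * Real.exp (-(s * x ^ 2))) := by rw [e3]
  rw [hl] at key
  rw [integral_const_mul] at key
  rw [hg] at key
  linarith


lemma int_exp_scaled {b : ℝ} (hb : 0 < b) :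
    ∫ s in Ioi (0:ℝ), Real.exp (-(b * s)) = 1 / b := by
  have h := integral_comp_mul_left_Ioi (fun u => Real.exp (-u)) 0 hb
  simp only [mul_zero, integral_exp_neg_Ioi, neg_zero, Real.exp_zero, smul_eq_mul,
    mul_one] at h
  rw [h, one_div]

lemma integrableOn_rpow_div_one_add_sq_s1 {α : ℝ} (hα0 : 0 < α) (hα1 : α < 1) :
    IntegrableOn (fun x : ℝ => x ^ α / (1 + x ^ 2)) (Ioi (0:ℝ)) := by
  have hcont : Continuous (fun x : ℝ => x ^ α / (1 + x ^ 2)) := by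
    refine (Real.continuous_rpow_const hα0.le).div (continuous_const.add (continuous_pow 2))
      (fun x => by positivity)
  have hmeas := hcont.measurable
  have h1 : IntegrableOn (fun x : ℝ => x ^ α / (1 + x ^ 2)) (Ioc (0:ℝ) 1) := by
    have hc : IntegrableOn (fun _ : ℝ => (1:ℝ)) (Ioc (0:ℝ) 1) :=
      integrableOn_const measure_Ioc_lt_top.ne
    refine hc.mono' hmeas.aestronglyMeasurable ?_
    filter_upwards [ae_restrict_mem measurableSet_Ioc] with x hx
    have hx0 : (0:ℝ) < x := hx.1
    have h1x : (0:ℝ) < 1 + x ^ 2 := by positivity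
    rw [Real.norm_eq_abs, abs_of_nonneg (by positivity)]
    rw [div_le_one h1x]
    calc x ^ α ≤ 1 ^ α := Real.rpow_le_rpow hx0.le hx.2 hα0.le
      _ = 1 := Real.one_rpow α
      _ ≤ 1 + x ^ 2 := by nlinarith
  have h2 : IntegrableOn (fun x : ℝ => x ^ α / (1 + x ^ 2)) (Ioi (1:ℝ)) := by
    refine (integrableOn_Ioi_rpow_of_lt (by linarith : α - 2 < -1) one_pos).mono'
      hmeas.aestronglyMeasurable ?_
    filter_upwards [ae_restrict_mem measurableSet_Ioi] with x hx
    have hx1 : (1:ℝ) < x := hx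
    have hx0 : (0:ℝ) < x := by linarith
    have h1x : (0:ℝ) < 1 + x ^ 2 := by positivity
    rw [Real.norm_eq_abs, abs_of_nonneg (by positivity)]
    rw [div_le_iff₀ h1x]
    have e : x ^ (α - 2) * x ^ 2 = x ^ α := by
      rw [← Real.rpow_natCast x 2, ← Real.rpow_add hx0]; norm_num
    nlinarith [Real.rpow_pos_of_pos hx0 (α - 2)]
  have := h1.union h2
  rwa [Ioc_union_Ioi_eq_Ioi (zero_le_one)] at this

lemma J_eval' {α : ℝ} (hα0 : 0 < α) (hα1 : α < 1) :
    ∫ x in Ioi (0:ℝ), x ^ α / (1 + x ^ 2) = π / (2 * Real.cos (π * α / 2)) := by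
  set μ := volume.restrict (Ioi (0:ℝ)) with hμ
  set f : ℝ → ℝ → ℝ := fun x s => x ^ α * (Real.exp (-s) * Real.exp (-(s * x ^ 2))) with hf
  have hb : ∀ x : ℝ, (0:ℝ) < 1 + x ^ 2 := fun x => by positivity
  have hcurry : ∀ x : ℝ, (fun s => f x s) = fun s => x ^ α * Real.exp (-(1 + x ^ 2) * s) := by
    intro x; funext s
    rw [hf]; simp only []
    rw [← Real.exp_add]; congr 1; ring
  have h2 : ∀ x : ℝ, Integrable (fun s => f x s) μ := by
    intro x
    rw [hcurry x, hμ]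
    exact (exp_neg_integrableOn_Ioi 0 (hb x)).const_mul _
  have hfnonneg : ∀ x ∈ Ioi (0:ℝ), ∀ s, 0 ≤ f x s := by
    intro x hx s
    have : (0:ℝ) < x := hx
    positivity
  have hinner : ∀ x : ℝ, ∫ s, f x s ∂μ = x ^ α / (1 + x ^ 2) := by
    intro x
    rw [hcurry x, hμ, integral_const_mul]
    rw [show -(1 + x ^ 2) = -((1 + x ^ 2)) by ring]
    have : ∀ s : ℝ, Real.exp (-(1 + x ^ 2) * s) = Real.exp (-((1 + x ^ 2) * s)) := by
      intro s; congr 1; ring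
    simp_rw [this]
    rw [int_exp_scaled (hb x)]
    rw [mul_one_div]
  have hmeasp : AEStronglyMeasurable (Function.uncurry f) (μ.prod μ) := by
    apply Continuous.aestronglyMeasurable
    exact ((Real.continuous_rpow_const hα0.le).comp continuous_fst).mul
      ((continuous_snd.neg.rexp).mul
        ((continuous_snd.mul (continuous_fst.pow 2)).neg.rexp))
  have h3 : Integrable (fun x => ∫ s, ‖f x s‖ ∂μ) μ := by
    apply (integrableOn_rpow_div_one_add_sq_s1 hα0 hα1).congr
    rw [hμ]
    filter_upwards [ae_restrict_mem measurableSet_Ioi] with x hx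
    rw [← hinner x]
    refine (integral_congr_ae ?_).symm
    filter_upwards with s
    rw [Real.norm_eq_abs, abs_of_nonneg (hfnonneg x hx s)]
  have hint : Integrable (Function.uncurry f) (μ.prod μ) :=
    (integrable_prod_iff hmeasp).mpr ⟨Filter.Eventually.of_forall h2, h3⟩
  have hswap := integral_integral_swap hint
  have hLHS : ∫ x, ∫ s, f x s ∂μ ∂μ = ∫ x in Ioi (0:ℝ), x ^ α / (1 + x ^ 2) := by
    rw [hμ]; exact integral_congr_ae (Filter.Eventually.of_forall (fun x => hinner x))
  have hRHS : ∫ s, ∫ x, f x s ∂μ ∂μ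
      = Real.Gamma ((α + 1) / 2) * Real.Gamma ((1 - α) / 2) / 2 := by
    have hin2 : ∀ s ∈ Ioi (0:ℝ), ∫ x, f x s ∂μ
        = Real.Gamma ((α + 1) / 2) / 2 * (s ^ (-((α + 1) / 2)) * Real.exp (-s)) := by
      intro s hs
      have hs0 : (0:ℝ) < s := hs
      rw [hμ]
      have : ∀ x : ℝ, f x s = Real.exp (-s) * (x ^ α * Real.exp (-(s * x ^ 2))) := by
        intro x; rw [hf]; ring
      simp_rw [this]
      rw [integral_const_mul, gauss_moment hα0 hs0]
      rw [one_div, Real.inv_rpow hs0.le, ← Real.rpow_neg hs0.le]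
      ring
    rw [hμ]
    rw [setIntegral_congr_fun measurableSet_Ioi hin2]
    rw [integral_const_mul]
    have := Real.integral_rpow_mul_exp_neg_mul_Ioi (a := (1 - α) / 2) (by linarith) one_pos
    rw [show (1 - α) / 2 - 1 = -((α + 1) / 2) by ring] at this
    simp_rw [one_mul] at this
    rw [this]
    simp [Real.Gamma_nonneg_of_nonneg]
    ring
  rw [hLHS, hRHS] at hswap
  rw [hμ, hswap]
  have hrefl := Real.Gamma_mul_Gamma_one_sub ((α + 1) / 2)
  rw [show (1:ℝ) - (α + 1) / 2 = (1 - α) / 2 by ring] at hrefl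
  rw [hrefl]
  rw [show π * ((α + 1) / 2) = π / 2 + π * α / 2 by ring]
  rw [Real.sin_add, Real.sin_pi_div_two, Real.cos_pi_div_two]
  ring_nf

lemma integrableOn_rpow_mul_exp_neg_mul {s b : ℝ} (hs : -1 < s) (hb : 0 < b) :
    IntegrableOn (fun x : ℝ => x ^ s * Real.exp (-(b * x))) (Ioi (0:ℝ)) := by
  have h := integrableOn_rpow_mul_exp_neg_mul_rpow hs one_pos hb
  refine h.congr_fun (fun x hx => ?_) measurableSet_Ioi
  dsimp only
  rw [Real.rpow_one]
  congr 1
  ring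

lemma I_eval {α : ℝ} (hα0 : 0 < α) (hα1 : α < 1) :
    ∫ t in Ioi (0:ℝ), Real.sin t / t ^ (α + 1)
      = π / (2 * Real.Gamma (α + 1) * Real.cos (π * α / 2)) := by
  set μ := volume.restrict (Ioi (0:ℝ)) with hμ
  set g : ℝ → ℝ → ℝ := fun t x => Real.sin t * (x ^ α * Real.exp (-(t * x))) with hg
  have hΓpos : 0 < Real.Gamma (α + 1) := Real.Gamma_pos_of_pos (by linarith)
  have hcos : 0 < Real.cos (π * α / 2) := by
    apply Real.cos_pos_of_mem_Ioo
    constructor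
    · nlinarith [Real.pi_pos]
    · nlinarith [Real.pi_pos]
  have hmeasp : AEStronglyMeasurable (Function.uncurry g) (μ.prod μ) := by
    apply Continuous.aestronglyMeasurable
    exact (Real.continuous_sin.comp continuous_fst).mul
      (((Real.continuous_rpow_const hα0.le).comp continuous_snd).mul
        ((continuous_fst.mul continuous_snd).neg.rexp))
  have hgamma : ∀ t : ℝ, 0 < t → ∫ x in Ioi (0:ℝ), x ^ α * Real.exp (-(t * x))
      = (1 / t) ^ (α + 1) * Real.Gamma (α + 1) := by
    intro t ht0
    have h := Real.integral_rpow_mul_exp_neg_mul_Ioi (a := α + 1) (by linarith) ht0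
    rw [show α + 1 - 1 = α by ring] at h
    exact h
  have hinner : ∀ t ∈ Ioi (0:ℝ), ∫ x, g t x ∂μ
      = Real.sin t * ((1 / t) ^ (α + 1) * Real.Gamma (α + 1)) := by
    intro t ht
    rw [hμ, integral_const_mul, hgamma t ht]
  have h2 : ∀ᵐ t ∂μ, Integrable (fun x => g t x) μ := by
    rw [hμ]
    filter_upwards [ae_restrict_mem measurableSet_Ioi] with t ht
    have ht0 : (0:ℝ) < t := ht
    have hbase : IntegrableOn (fun x : ℝ => x ^ α * Real.exp (-(t * x))) (Ioi (0:ℝ)) :=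
      integrableOn_rpow_mul_exp_neg_mul (by linarith) ht0
    exact hbase.const_mul _
  have hnormeq : ∀ᵐ t ∂μ, (∫ x, ‖g t x‖ ∂μ)
      = |Real.sin t| * ((1 / t) ^ (α + 1) * Real.Gamma (α + 1)) := by
    rw [hμ]
    filter_upwards [ae_restrict_mem measurableSet_Ioi] with t ht
    have ht0 : (0:ℝ) < t := ht
    have e : ∫ x, ‖g t x‖ ∂(volume.restrict (Ioi (0:ℝ)))
        = ∫ x in Ioi (0:ℝ), |Real.sin t| * (x ^ α * Real.exp (-(t * x))) := by
      refine setIntegral_congr_fun measurableSet_Ioi (fun x hx => ?_)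
      have hx0 : (0:ℝ) < x := hx
      rw [hg]
      simp only []
      rw [Real.norm_eq_abs, abs_mul,
        abs_of_nonneg (by positivity : (0:ℝ) ≤ x ^ α * Real.exp (-(t * x)))]
    rw [e, integral_const_mul, hgamma t ht0]
  have h3 : Integrable (fun t => ∫ x, ‖g t x‖ ∂μ) μ := by
    have hmeas : Measurable
        (fun t : ℝ => |Real.sin t| * ((1 / t) ^ (α + 1) * Real.Gamma (α + 1))) := by
      refine (Real.measurable_sin.abs).mul (Measurable.mul ?_ measurable_const)
      exact ((Real.continuous_rpow_const (by linarith : (0:ℝ) ≤ α + 1)).measurable).comp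
        (measurable_const.div measurable_id)
    have hrw : ∀ t : ℝ, 0 < t → (1 / t) ^ (α + 1) = t ^ (-(α + 1)) := by
      intro t ht0
      rw [one_div, ← Real.rpow_neg_one t, ← Real.rpow_mul ht0.le]
      norm_num
    have hpart1 : IntegrableOn
        (fun t : ℝ => |Real.sin t| * ((1 / t) ^ (α + 1) * Real.Gamma (α + 1))) (Ioc (0:ℝ) 1) := by
      have hin : IntegrableOn (fun t : ℝ => Real.Gamma (α + 1) * t ^ (-α)) (Ioc (0:ℝ) 1) := by
        refine Integrable.const_mul ?_ _
        have := intervalIntegral.intervalIntegrable_rpow'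
          (a := 0) (b := 1) (by linarith : (-1:ℝ) < -α)
        rwa [intervalIntegrable_iff_integrableOn_Ioc_of_le zero_le_one] at this
      refine hin.mono' hmeas.aestronglyMeasurable ?_
      filter_upwards [ae_restrict_mem measurableSet_Ioc] with t ht
      have ht0 : (0:ℝ) < t := ht.1
      rw [Real.norm_eq_abs, abs_of_nonneg (by positivity), hrw t ht0]
      have hsin : |Real.sin t| ≤ t := by
        calc |Real.sin t| ≤ |t| := Real.abs_sin_le_abs
          _ = t := abs_of_pos ht0
      have e : t * t ^ (-(α + 1)) = t ^ (-α) := by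
        nth_rewrite 1 [← Real.rpow_one t]
        rw [← Real.rpow_add ht0]
        norm_num
      calc |Real.sin t| * (t ^ (-(α + 1)) * Real.Gamma (α + 1))
          ≤ t * (t ^ (-(α + 1)) * Real.Gamma (α + 1)) := by gcongr
        _ = Real.Gamma (α + 1) * (t * t ^ (-(α + 1))) := by ring
        _ = Real.Gamma (α + 1) * t ^ (-α) := by rw [e]
    have hpart2 : IntegrableOn
        (fun t : ℝ => |Real.sin t| * ((1 / t) ^ (α + 1) * Real.Gamma (α + 1))) (Ioi (1:ℝ)) := by
      have hin : IntegrableOn (fun t : ℝ => Real.Gamma (α + 1) * t ^ (-(α + 1))) (Ioi (1:ℝ)) :=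
        Integrable.const_mul (integrableOn_Ioi_rpow_of_lt (by linarith) one_pos) _
      refine hin.mono' hmeas.aestronglyMeasurable ?_
      filter_upwards [ae_restrict_mem measurableSet_Ioi] with t ht
      have ht0 : (0:ℝ) < t := lt_trans one_pos ht
      rw [Real.norm_eq_abs, abs_of_nonneg (by positivity), hrw t ht0]
      calc |Real.sin t| * (t ^ (-(α + 1)) * Real.Gamma (α + 1))
          ≤ 1 * (t ^ (-(α + 1)) * Real.Gamma (α + 1)) := by
            gcongr
            exact Real.abs_sin_le_one t
        _ = Real.Gamma (α + 1) * t ^ (-(α + 1)) := by ring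
    have hbound := hpart1.union hpart2
    rw [Ioc_union_Ioi_eq_Ioi zero_le_one] at hbound
    have hbound' : Integrable
        (fun t : ℝ => |Real.sin t| * ((1 / t) ^ (α + 1) * Real.Gamma (α + 1))) μ := by
      rw [hμ]; exact hbound
    exact hbound'.congr (hnormeq.mono fun t ht => ht.symm)
  have hint : Integrable (Function.uncurry g) (μ.prod μ) :=
    (integrable_prod_iff hmeasp).mpr ⟨h2, h3⟩
  have hswap := integral_integral_swap hint
  have hLHS : ∫ t, ∫ x, g t x ∂μ ∂μ
      = Real.Gamma (α + 1) * ∫ t in Ioi (0:ℝ), Real.sin t / t ^ (α + 1) := by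
    have e1 : ∫ t, ∫ x, g t x ∂μ ∂μ
        = ∫ t in Ioi (0:ℝ), Real.Gamma (α + 1) * (Real.sin t / t ^ (α + 1)) := by
      rw [hμ]
      refine setIntegral_congr_fun measurableSet_Ioi (fun t ht => ?_)
      have ht0 : (0:ℝ) < t := ht
      rw [hinner t ht]
      rw [one_div, Real.inv_rpow ht0.le, div_eq_mul_inv]
      ring
    rw [e1, integral_const_mul]
  have hRHS : ∫ x, ∫ t, g t x ∂μ ∂μ = π / (2 * Real.cos (π * α / 2)) := by
    have e2 : ∀ x ∈ Ioi (0:ℝ), ∫ t, g t x ∂μ = x ^ α / (1 + x ^ 2) := by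
      intro x hx
      have hx0 : (0:ℝ) < x := hx
      have e3 : ∫ t, g t x ∂μ = ∫ t in Ioi (0:ℝ), x ^ α * (Real.sin t * Real.exp (-(t * x))) := by
        rw [hμ]
        refine setIntegral_congr_fun measurableSet_Ioi (fun t ht => ?_)
        rw [hg]; simp only []; ring
      rw [e3, integral_const_mul, laplace_sin hx0, mul_one_div]
    rw [hμ, setIntegral_congr_fun measurableSet_Ioi e2, J_eval' hα0 hα1]
  rw [hLHS, hRHS] at hswap
  rw [eq_div_iff (by positivity :
    (2:ℝ) * Real.cos (π * α / 2) ≠ 0)] at hswap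
  rw [hμ, eq_div_iff (by positivity)]
  linear_combination hswap

lemma scaled_I {α : ℝ} (hα0 : 0 < α) (hα1 : α < 1) {v : ℝ} (hv : 0 < v) :
    ∫ t in Ioi (0:ℝ), Real.sin (t * v) / t ^ (α + 1)
      = v ^ α * (π / (2 * Real.Gamma (α + 1) * Real.cos (π * α / 2))) := by
  have key := integral_comp_mul_right_Ioi (fun u => Real.sin u / u ^ (α + 1)) 0 hv
  simp only [zero_mul, smul_eq_mul] at key
  have e : ∀ t ∈ Ioi (0:ℝ), Real.sin (t * v) / t ^ (α + 1)
      = v ^ (α + 1) * (Real.sin (t * v) / (t * v) ^ (α + 1)) := by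
    intro t ht
    have ht0 : (0:ℝ) < t := ht
    rw [Real.mul_rpow ht0.le hv.le]
    field_simp
  rw [setIntegral_congr_fun measurableSet_Ioi e, integral_const_mul, key, I_eval hα0 hα1]
  rw [← mul_assoc]
  congr 1
  rw [Real.rpow_add_one hv.ne']
  field_simp

theorem vonBahrEssen_sign_abs_rpow_lt_one (α : ℝ) (hα : α ∈ Set.Ioo (0:ℝ) 1) (v : ℝ) :
    Real.sign v * |v| ^ α = (Real.Gamma (α + 1) * Real.cos (π * α / 2) / π) *
      ∫ ω : ℝ, Real.sign ω * Real.sin (ω * v) / |ω| ^ (α + 1) := by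
  obtain ⟨hα0, hα1⟩ := hα
  have hΓpos : 0 < Real.Gamma (α + 1) := Real.Gamma_pos_of_pos (by linarith)
  have hcos : 0 < Real.cos (π * α / 2) := by
    apply Real.cos_pos_of_mem_Ioo
    constructor
    · nlinarith [Real.pi_pos]
    · nlinarith [Real.pi_pos]
  have habs : (fun ω : ℝ => Real.sign ω * Real.sin (ω * v) / |ω| ^ (α + 1))
      = fun ω : ℝ => (fun t => Real.sin (t * v) / t ^ (α + 1)) |ω| := by
    funext ω
    rcases lt_trichotomy ω 0 with h | h | h
    · simp only [Real.sign_of_neg h, abs_of_neg h]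
      rw [show -ω * v = -(ω * v) by ring, Real.sin_neg]
      ring
    · subst h
      simp
    · rw [Real.sign_of_pos h, abs_of_pos h]
      ring
  rw [habs, integral_comp_abs (f := fun t => Real.sin (t * v) / t ^ (α + 1))]
  rcases lt_trichotomy v 0 with h | h | h
  · have e : ∀ t ∈ Ioi (0:ℝ), Real.sin (t * v) / t ^ (α + 1)
        = -(Real.sin (t * (-v)) / t ^ (α + 1)) := by
      intro t ht
      rw [show t * v = -(t * (-v)) by ring, Real.sin_neg]
      ring
    rw [setIntegral_congr_fun measurableSet_Ioi e, integral_neg, scaled_I hα0 hα1 (by linarith)]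
    rw [Real.sign_of_neg h, abs_of_neg h]
    have hc := hcos.ne'
    field_simp
    ring_nf
    rw [show α * π * (1 / 2) = π * α / 2 by ring, mul_inv_cancel_right₀ hc]
  · subst h
    simp
  · rw [scaled_I hα0 hα1 h, Real.sign_of_pos h, abs_of_pos h]
    have hc := hcos.ne'
    field_simp
    ring_nf
    rw [show α * π * (1 / 2) = π * α / 2 by ring, mul_inv_cancel₀ hc]
end

section
/- Let α ∈ (0,2] and M ≥ 1 an integer. For every real x with |x| ≤ 1/2, the series ∑_{ℓ ≥ 0} C(α, ℓ+2M+1) x^ℓ converges absolutely and its absolute value is bounded by 2/(2M+1) + 2 log 2. -/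
open Real Finset

/-- Generalized binomial coefficient `C(α, ℓ) = α(α-1)⋯(α-ℓ+1)/ℓ!` for real `α`. -/
noncomputable def genBinom (α : ℝ) (ℓ : ℕ) : ℝ :=
  (∏ j ∈ Finset.range ℓ, (α - j)) / (Nat.factorial ℓ)

lemma genBinom_abs_le (α : ℝ) (hα : α ∈ Set.Ioc (0:ℝ) 2) (m : ℕ) :
    |genBinom α (m + 1)| ≤ 2 / (m + 1) := by
  obtain ⟨hα0, hα2⟩ := hα
  have hprod : |∏ j ∈ Finset.range m, (α - (j + 1 : ℕ))| ≤ (m.factorial : ℝ) := by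
    rw [abs_prod]
    calc ∏ j ∈ Finset.range m, |α - ((j:ℕ) + 1 : ℕ)|
        ≤ ∏ j ∈ Finset.range m, ((j : ℝ) + 1) := by
          apply Finset.prod_le_prod (fun i _ => abs_nonneg _)
          intro i _
          rw [abs_le]
          push_cast
          constructor <;> nlinarith [Nat.cast_nonneg (α := ℝ) i]
      _ = (m.factorial : ℝ) := by
          rw [← Finset.prod_range_add_one_eq_factorial m]
          push_cast
          rfl
  have hfac : (0:ℝ) < ((m+1).factorial : ℝ) := by positivity
  rw [genBinom, abs_div, abs_of_pos hfac]
  rw [Finset.prod_range_succ', abs_mul]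
  simp only [Nat.cast_zero, sub_zero]
  have h1 : |∏ j ∈ Finset.range m, (α - ((j:ℕ) + 1 : ℕ))| * |α| ≤ (m.factorial : ℝ) * 2 := by
    apply mul_le_mul hprod (by rw [abs_of_pos hα0]; exact hα2) (abs_nonneg _)
      (Nat.cast_nonneg _)
  rw [div_le_div_iff₀ hfac (by positivity)]
  calc |∏ x ∈ Finset.range m, (α - (↑x + 1 : ℕ))| * |α| * (m + 1 : ℝ)
      ≤ (m.factorial : ℝ) * 2 * (m + 1) := by
        apply mul_le_mul_of_nonneg_right h1 (by positivity)
    _ = 2 * ((m+1).factorial : ℝ) := by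
        rw [Nat.factorial_succ]; push_cast; ring

theorem genBinom_series_bound (α : ℝ) (hα : α ∈ Set.Ioc (0:ℝ) 2) (M : ℕ) (hM : 1 ≤ M)
    (x : ℝ) (hx : |x| ≤ 1/2) :
    Summable (fun ℓ : ℕ => |genBinom α (ℓ + 2 * M + 1) * x ^ ℓ|) ∧
    |∑' ℓ : ℕ, genBinom α (ℓ + 2 * M + 1) * x ^ ℓ| ≤ 2 / (2 * M + 1) + 2 * Real.log 2 := by
  -- bounding function
  set b : ℕ → ℝ := fun ℓ => if ℓ = 0 then 2 / (2 * M + 1) else 2 * ((1/2:ℝ) ^ ℓ / ℓ) with hb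
  have hlog : HasSum (fun n : ℕ => (1/2:ℝ) ^ (n + 1) / (n + 1)) (Real.log 2) := by
    have := hasSum_pow_div_log_of_abs_lt_one (x := (1/2:ℝ)) (by rw [abs_of_pos]; norm_num; norm_num)
    have h2 : -Real.log (1 - 1/2) = Real.log 2 := by
      rw [show (1:ℝ) - 1/2 = 2⁻¹ by norm_num, Real.log_inv]; ring
    rwa [h2] at this
  have hbsum : HasSum b (2 / (2 * M + 1) + 2 * Real.log 2) := by
    have h1 : HasSum (fun n : ℕ => b (n + 1)) (2 * Real.log 2) := by
      have := hlog.mul_left 2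
      convert this using 2 with n
      · rfl
      simp only [hb, Nat.succ_ne_zero, if_false]
      push_cast
      ring
    have h2 := (hasSum_nat_add_iff (f := b) 1).mp h1
    convert h2 using 1
    · rfl
    simp [hb]
    ring
  have hle : ∀ ℓ : ℕ, |genBinom α (ℓ + 2 * M + 1) * x ^ ℓ| ≤ b ℓ := by
    intro ℓ
    have hg : |genBinom α (ℓ + 2 * M + 1)| ≤ 2 / (ℓ + 2 * M + 1) := by
      have := genBinom_abs_le α hα (ℓ + 2 * M)
      convert this using 3 <;> push_cast <;> ring
    rw [abs_mul, abs_pow]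
    rcases Nat.eq_zero_or_pos ℓ with h0 | hpos
    · subst h0
      simp only [hb, if_pos rfl, pow_zero, mul_one]
      convert hg using 3
      push_cast; ring
    · have hne : ℓ ≠ 0 := hpos.ne'
      simp only [hb, if_neg hne]
      have hg2 : |genBinom α (ℓ + 2 * M + 1)| ≤ 2 / ℓ := by
        refine hg.trans ?_
        apply div_le_div_of_nonneg_left (by norm_num) (by positivity)
        have : (0:ℝ) ≤ 2 * M + 1 := by positivity
        push_cast; linarith
      have hxp : |x| ^ ℓ ≤ (1/2:ℝ) ^ ℓ := pow_le_pow_left₀ (abs_nonneg x) hx ℓ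
      calc |genBinom α (ℓ + 2 * M + 1)| * |x| ^ ℓ
          ≤ (2 / ℓ) * ((1/2:ℝ) ^ ℓ) := by
            apply mul_le_mul hg2 hxp (by positivity) (by positivity)
        _ = 2 * ((1/2:ℝ) ^ ℓ / ℓ) := by ring
  have hsummable : Summable (fun ℓ : ℕ => |genBinom α (ℓ + 2 * M + 1) * x ^ ℓ|) :=
    Summable.of_nonneg_of_le (fun _ => abs_nonneg _) hle hbsum.summable
  refine ⟨hsummable, ?_⟩
  calc |∑' ℓ : ℕ, genBinom α (ℓ + 2 * M + 1) * x ^ ℓ|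
      ≤ ∑' ℓ : ℕ, |genBinom α (ℓ + 2 * M + 1) * x ^ ℓ| :=
        by
          have habs := norm_tsum_le_tsum_norm
            (f := fun ℓ : ℕ => genBinom α (ℓ + 2 * M + 1) * x ^ ℓ)
            (by simpa only [Real.norm_eq_abs] using hsummable)
          simpa only [Real.norm_eq_abs] using habs
    _ ≤ ∑' ℓ : ℕ, b ℓ := Summable.tsum_le_tsum hle hsummable hbsum.summable
    _ = 2 / (2 * M + 1) + 2 * Real.log 2 := hbsum.tsum_eq
end

section
/- Let ψ : ℝ → ℂ satisfy t^m ψ(t) ∈ L¹ for m = 0,…,M with M ≥ 2, ∫ t^m ψ dt = 0 for m = 0,…,M-1, and |ψ̂(ω)|²/|ω| ∈ L¹. Fix α ∈ (0,2), a₁, a₂ > 0, and a bounded measurable ζ : ℝ → ℂ. Then the function P(ω) = ζ(ω) conj(ψ̂(a₁ω)) ψ̂(a₂ω) / |ω|^{α+1} is integrable on ℝ. -/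
open Real MeasureTheory Complex

lemma abs_expI_sub_one_le (t : ℝ) :
    ‖Complex.exp (Complex.I * t) - 1‖ ≤ |t| := by
  have h : Complex.exp (Complex.I * t) - 1
      = ((Real.cos t - 1 : ℝ) : ℂ) + ((Real.sin t : ℝ) : ℂ) * Complex.I := by
    rw [mul_comm, Complex.exp_mul_I]; push_cast; ring
  rw [h, Complex.norm_add_mul_I]
  rw [show |t| = Real.sqrt (t ^ 2) by rw [Real.sqrt_sq_eq_abs]]
  apply Real.sqrt_le_sqrt
  have h1 := Real.cos_two_mul' (t / 2)
  rw [show 2 * (t / 2) = t by ring] at h1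
  nlinarith [Real.sin_sq_add_cos_sq t, Real.sin_sq_add_cos_sq (t / 2),
    Real.sin_sq_le_sq (x := t / 2)]

lemma abs_expI_taylor2_nonneg {x : ℝ} (hx : 0 ≤ x) :
    ‖Complex.exp (Complex.I * x) - 1 - Complex.I * x‖ ≤ x ^ 2 / 2 := by
  have hderiv : ∀ t : ℝ,
      HasDerivAt (fun s : ℝ => Complex.exp (Complex.I * s) - 1 - Complex.I * s)
        (Complex.I * Complex.exp (Complex.I * t) - Complex.I) t := by
    intro t
    have h1 : HasDerivAt (fun s : ℝ => (s : ℂ)) 1 t := by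
      simpa using (hasDerivAt_id t).ofReal_comp
    have h2 : HasDerivAt (fun s : ℝ => Complex.I * (s : ℂ)) Complex.I t := by
      simpa using h1.const_mul Complex.I
    have h3 := h2.cexp
    have h4 := (h3.sub_const 1).sub h2
    rw [show Complex.I * Complex.exp (Complex.I * t) - Complex.I
      = Complex.exp (Complex.I * t) * Complex.I - Complex.I by ring]
    exact h4
  have hcont : Continuous fun t : ℝ => Complex.I * Complex.exp (Complex.I * t) - Complex.I := by
    continuity
  have hFTC : ∫ t in (0:ℝ)..x, (Complex.I * Complex.exp (Complex.I * t) - Complex.I)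
      = (Complex.exp (Complex.I * x) - 1 - Complex.I * x) -
        (Complex.exp (Complex.I * (0:ℝ)) - 1 - Complex.I * (0:ℝ)) :=
    intervalIntegral.integral_eq_sub_of_hasDerivAt (fun t _ => hderiv t)
      (hcont.intervalIntegrable 0 x)
  have h0 : (Complex.exp (Complex.I * (0:ℝ)) - 1 - Complex.I * (0:ℝ)) = 0 := by simp
  rw [h0, sub_zero] at hFTC
  rw [← hFTC]
  calc ‖∫ t in (0:ℝ)..x, (Complex.I * Complex.exp (Complex.I * t) - Complex.I)‖
      ≤ |∫ t in (0:ℝ)..x, t| := by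
        apply intervalIntegral.norm_integral_le_abs_of_norm_le
        · filter_upwards [MeasureTheory.ae_restrict_mem measurableSet_uIoc] with t ht
          have h5 : Complex.I * Complex.exp (Complex.I * t) - Complex.I
              = Complex.I * (Complex.exp (Complex.I * t) - 1) := by ring
          rw [h5, norm_mul, Complex.norm_I, one_mul]
          refine (abs_expI_sub_one_le t).trans ?_
          rw [Set.uIoc_of_le hx] at ht
          rw [abs_of_pos ht.1]
        · exact continuous_id.intervalIntegrable 0 x
    _ = x ^ 2 / 2 := by
        rw [integral_id, _root_.abs_of_nonneg (by nlinarith [sq_nonneg x] : (0:ℝ) ≤ (x ^ 2 - 0 ^ 2) / 2)]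
        ring

lemma abs_expI_taylor2 (x : ℝ) :
    ‖Complex.exp (Complex.I * x) - 1 - Complex.I * x‖ ≤ x ^ 2 / 2 := by
  rcases le_total 0 x with hx | hx
  · exact abs_expI_taylor2_nonneg hx
  · have h := abs_expI_taylor2_nonneg (x := -x) (by linarith)
    have hc : Complex.exp (Complex.I * ((-x : ℝ) : ℂ)) - 1 - Complex.I * ((-x : ℝ) : ℂ)
        = (starRingEnd ℂ) (Complex.exp (Complex.I * x) - 1 - Complex.I * x) := by
      simp only [map_sub, map_mul, Complex.conj_I, Complex.conj_ofReal, ← Complex.exp_conj,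
        map_one]
      push_cast
      ring_nf
    rw [hc, Complex.norm_conj] at h
    calc ‖Complex.exp (Complex.I * x) - 1 - Complex.I * x‖ ≤ (-x) ^ 2 / 2 := h
      _ = x ^ 2 / 2 := by ring

private lemma split_aux (c a₁ a₂ A₁ A₂ w : ℝ) (ha₁ : a₁ ≠ 0) (ha₂ : a₂ ≠ 0) (hw : w ≠ 0) :
    (c * (A₁ ^ 2 + A₂ ^ 2) / 2) / w
      = (c * a₁ / 2) * (A₁ ^ 2 / (a₁ * w)) + (c * a₂ / 2) * (A₂ ^ 2 / (a₂ * w)) := by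
  field_simp

set_option maxHeartbeats 2000000 in
theorem crossSpectralDensity_integrable (M : ℕ) (hM : 2 ≤ M) (ψ : ℝ → ℂ)
    (hint : ∀ m ≤ M, Integrable (fun t : ℝ => (t : ℂ) ^ m * ψ t))
    (hvan : ∀ m < M, ∫ t : ℝ, (t : ℂ) ^ m * ψ t = 0)
    (ψhat : ℝ → ℂ)
    (hψhat : ∀ ω : ℝ, ψhat ω = ∫ t : ℝ, ψ t * Complex.exp (-(Complex.I * ω * t)))
    (hadm : Integrable (fun ω : ℝ => ‖ψhat ω‖ ^ 2 / |ω|))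
    (α : ℝ) (hα : α ∈ Set.Ioo (0:ℝ) 2)
    (a₁ a₂ : ℝ) (ha₁ : 0 < a₁) (ha₂ : 0 < a₂)
    (ζ : ℝ → ℂ) (hζm : Measurable ζ) (c : ℝ) (hζ : ∀ ω : ℝ, ‖ζ ω‖ ≤ c) :
    Integrable (fun ω : ℝ =>
      ζ ω * (starRingEnd ℂ) (ψhat (a₁ * ω)) * ψhat (a₂ * ω) / ((|ω| ^ (α + 1) : ℝ) : ℂ)) := by
  obtain ⟨hα0, hα2⟩ := hα
  have hψint : Integrable ψ := by simpa using hint 0 (by omega)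
  have htψint : Integrable (fun t : ℝ => (t : ℂ) * ψ t) := by simpa using hint 1 (by omega)
  have ht2ψint : Integrable (fun t : ℝ => (t : ℂ) ^ 2 * ψ t) := hint 2 hM
  have hvan0 : ∫ t : ℝ, ψ t = 0 := by simpa using hvan 0 (by omega)
  have hvan1 : ∫ t : ℝ, (t : ℂ) * ψ t = 0 := by simpa using hvan 1 (by omega)
  have hc : 0 ≤ c := le_trans (norm_nonneg _) (hζ 0)
  -- integrability of the modulated integrand
  have hexp_int : ∀ ω : ℝ,
      Integrable (fun t : ℝ => ψ t * Complex.exp (-(Complex.I * ω * t))) := by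
    intro ω
    have hm : AEStronglyMeasurable (fun t : ℝ => Complex.exp (-(Complex.I * ω * t))) volume := by
      apply Continuous.aestronglyMeasurable
      continuity
    have := hψint.bdd_mul hm (c := 1) (Filter.Eventually.of_forall fun t => by
      simp [Complex.norm_exp])
    simpa [mul_comm] using this
  -- the second-order bound on ψhat
  set Cψ : ℝ := (∫ t : ℝ, t ^ 2 * ‖ψ t‖) / 2 with hCψ
  have hCψ0 : 0 ≤ Cψ := by
    apply div_nonneg _ (by norm_num)
    apply integral_nonneg
    intro t
    positivity
  have habs2 : ∀ t : ℝ, ‖(t : ℂ) ^ 2 * ψ t‖ = t ^ 2 * ‖ψ t‖ := by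
    intro t
    simp [sq_abs]
  have hbound2 : ∀ ω : ℝ, ‖ψhat ω‖ ≤ Cψ * ω ^ 2 := by
    intro ω
    have hfun : (fun t : ℝ =>
        ψ t * (Complex.exp (Complex.I * ((-(ω * t) : ℝ) : ℂ)) - 1
          - Complex.I * ((-(ω * t) : ℝ) : ℂ)))
        = fun t : ℝ => (ψ t * Complex.exp (-(Complex.I * ω * t)) - ψ t)
          + (Complex.I * ω) * ((t : ℂ) * ψ t) := by
      funext t
      have h : Complex.I * ((-(ω * t) : ℝ) : ℂ) = -(Complex.I * ω * t) := by
        push_cast; ring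
      rw [h]; ring
    have hsub : Integrable (fun t : ℝ => ψ t * Complex.exp (-(Complex.I * ω * t)) - ψ t) :=
      (hexp_int ω).sub hψint
    have hTay : Integrable (fun t : ℝ =>
        ψ t * (Complex.exp (Complex.I * ((-(ω * t) : ℝ) : ℂ)) - 1
          - Complex.I * ((-(ω * t) : ℝ) : ℂ))) := by
      rw [hfun]
      exact hsub.add (htψint.const_mul (Complex.I * ω))
    have hkey : ψhat ω = ∫ t : ℝ,
        ψ t * (Complex.exp (Complex.I * ((-(ω * t) : ℝ) : ℂ)) - 1
          - Complex.I * ((-(ω * t) : ℝ) : ℂ)) := by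
      have h2 : ∫ t : ℝ,
          ψ t * (Complex.exp (Complex.I * ((-(ω * t) : ℝ) : ℂ)) - 1
            - Complex.I * ((-(ω * t) : ℝ) : ℂ))
          = ∫ t : ℝ, ((ψ t * Complex.exp (-(Complex.I * ω * t)) - ψ t)
            + (Complex.I * ω) * ((t : ℂ) * ψ t)) := by
        rw [hfun]
      rw [hψhat ω, h2, integral_add hsub (htψint.const_mul (Complex.I * ω)),
        integral_sub (hexp_int ω) hψint, hvan0, integral_const_mul, hvan1]
      ring
    have h1 : ∀ t : ℝ, ‖ψ t * (Complex.exp (Complex.I * ((-(ω * t) : ℝ) : ℂ)) - 1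
        - Complex.I * ((-(ω * t) : ℝ) : ℂ))‖ ≤ ‖ψ t‖ * ((ω * t) ^ 2 / 2) := by
      intro t
      rw [norm_mul]
      apply mul_le_mul_of_nonneg_left _ (norm_nonneg _)
      calc ‖Complex.exp (Complex.I * ((-(ω * t) : ℝ) : ℂ)) - 1
            - Complex.I * ((-(ω * t) : ℝ) : ℂ)‖ ≤ (-(ω * t)) ^ 2 / 2 := abs_expI_taylor2 _
        _ = (ω * t) ^ 2 / 2 := by ring
    have hmaj : Integrable (fun t : ℝ => ‖ψ t‖ * ((ω * t) ^ 2 / 2)) := by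
      have h3 : (fun t : ℝ => ‖ψ t‖ * ((ω * t) ^ 2 / 2))
          = fun t : ℝ => (ω ^ 2 / 2) * ‖(t : ℂ) ^ 2 * ψ t‖ := by
        funext t; rw [habs2 t]; ring
      rw [h3]
      exact ht2ψint.norm.const_mul _
    have hstep1 : ‖ψhat ω‖ ≤ ∫ t : ℝ, ‖ψ t * (Complex.exp
        (Complex.I * ((-(ω * t) : ℝ) : ℂ)) - 1 - Complex.I * ((-(ω * t) : ℝ) : ℂ))‖ := by
      rw [hkey]
      exact norm_integral_le_integral_norm _
    have hstep2 : (∫ t : ℝ, ‖ψ t * (Complex.exp (Complex.I * ((-(ω * t) : ℝ) : ℂ)) - 1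
        - Complex.I * ((-(ω * t) : ℝ) : ℂ))‖)
        ≤ ∫ t : ℝ, ‖ψ t‖ * ((ω * t) ^ 2 / 2) :=
      integral_mono hTay.norm hmaj h1
    have hstep3 : (∫ t : ℝ, ‖ψ t‖ * ((ω * t) ^ 2 / 2)) = Cψ * ω ^ 2 := by
      have h3 : (fun t : ℝ => ‖ψ t‖ * ((ω * t) ^ 2 / 2))
          = fun t : ℝ => (ω ^ 2 / 2) * (t ^ 2 * ‖ψ t‖) := by
        funext t; ring
      rw [h3, integral_const_mul, hCψ]
      ring
    exact hstep1.trans (hstep2.trans (le_of_eq hstep3))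
  clear_value Cψ
  -- continuity of ψhat
  have hψhat_cont : Continuous ψhat := by
    have h : Continuous fun ω : ℝ => ∫ t : ℝ, ψ t * Complex.exp (-(Complex.I * ω * t)) := by
      apply continuous_of_dominated (bound := fun t : ℝ => ‖ψ t‖)
      · intro ω; exact (hexp_int ω).1
      · intro ω
        filter_upwards with t
        rw [norm_mul]
        simp [Complex.norm_exp]
      · exact hψint.norm
      · filter_upwards with t
        continuity
    have h2 : ψhat = fun ω : ℝ => ∫ t : ℝ, ψ t * Complex.exp (-(Complex.I * ω * t)) :=
      funext hψhat
    rw [h2]; exact h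
  -- measurability of the integrand
  have hAESM : AEStronglyMeasurable (fun ω : ℝ =>
      ζ ω * (starRingEnd ℂ) (ψhat (a₁ * ω)) * ψhat (a₂ * ω) / ((|ω| ^ (α + 1) : ℝ) : ℂ))
      volume := by
    have hnum : AEStronglyMeasurable (fun ω : ℝ =>
        ζ ω * (starRingEnd ℂ) (ψhat (a₁ * ω)) * ψhat (a₂ * ω)) volume := by
      refine AEStronglyMeasurable.mul (AEStronglyMeasurable.mul hζm.aestronglyMeasurable ?_) ?_
      · exact (Complex.continuous_conj.comp
          (hψhat_cont.comp (continuous_const.mul continuous_id))).aestronglyMeasurable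
      · exact (hψhat_cont.comp (continuous_const.mul continuous_id)).aestronglyMeasurable
    have hden : Measurable (fun ω : ℝ => (((|ω| ^ (α + 1))⁻¹ : ℝ) : ℂ)) :=
      Complex.measurable_ofReal.comp
        (((continuous_abs : Continuous fun x : ℝ => |x|).rpow_const (fun x => Or.inr (by linarith))).measurable.inv)
    have heq : (fun ω : ℝ =>
        ζ ω * (starRingEnd ℂ) (ψhat (a₁ * ω)) * ψhat (a₂ * ω) / ((|ω| ^ (α + 1) : ℝ) : ℂ))
        = fun ω : ℝ => (((|ω| ^ (α + 1))⁻¹ : ℝ) : ℂ)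
          * (ζ ω * (starRingEnd ℂ) (ψhat (a₁ * ω)) * ψhat (a₂ * ω)) := by
      funext ω
      rw [div_eq_inv_mul, Complex.ofReal_inv]
    rw [heq]
    exact hden.aestronglyMeasurable.mul hnum
  -- the dominating function
  set K : ℝ := c * (Cψ * a₁ ^ 2) * (Cψ * a₂ ^ 2) with hK
  have hK0 : 0 ≤ K := by
    rw [hK]
    have := mul_nonneg hCψ0 (sq_nonneg a₁)
    have := mul_nonneg hCψ0 (sq_nonneg a₂)
    positivity
  clear_value K
  set B : ℝ → ℝ := fun ω => Set.indicator (Set.Icc (-1 : ℝ) 1) (fun _ => K) ω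
      + ((c * a₁ / 2) * ((‖ψhat (a₁ * ω)‖) ^ 2 / |a₁ * ω|)
        + (c * a₂ / 2) * ((‖ψhat (a₂ * ω)‖) ^ 2 / |a₂ * ω|)) with hB
  have hBint : Integrable B := by
    apply Integrable.add
    · exact (integrable_indicator_iff measurableSet_Icc).2
        (integrableOn_const measure_Icc_lt_top.ne)
    · exact ((hadm.comp_mul_left' ha₁.ne').const_mul _).add
        ((hadm.comp_mul_left' ha₂.ne').const_mul _)
  clear_value B
  apply Integrable.mono' hBint hAESM
  filter_upwards with ω
  have hnorm : ‖ζ ω * (starRingEnd ℂ) (ψhat (a₁ * ω)) * ψhat (a₂ * ω)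
      / ((|ω| ^ (α + 1) : ℝ) : ℂ)‖
      = ‖ζ ω‖ * ‖ψhat (a₁ * ω)‖ * ‖ψhat (a₂ * ω)‖
        / (|ω| ^ (α + 1)) := by
    rw [norm_div, norm_mul, norm_mul]
    simp [Complex.norm_conj,
      _root_.abs_of_nonneg (Real.rpow_nonneg (abs_nonneg ω) (α + 1))]
  rw [hnorm]
  set A₁ : ℝ := ‖ψhat (a₁ * ω)‖ with hA₁
  set A₂ : ℝ := ‖ψhat (a₂ * ω)‖ with hA₂
  have hA₁0 : 0 ≤ A₁ := norm_nonneg _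
  have hA₂0 : 0 ≤ A₂ := norm_nonneg _
  have hb₁ : A₁ ≤ Cψ * (a₁ * ω) ^ 2 := by rw [hA₁]; exact hbound2 (a₁ * ω)
  have hb₂ : A₂ ≤ Cψ * (a₂ * ω) ^ 2 := by rw [hA₂]; exact hbound2 (a₂ * ω)
  clear_value A₁ A₂
  rcases le_or_gt |ω| 1 with hω | hω
  · -- small ω : use the quadratic bound
    have hmem : ω ∈ Set.Icc (-1 : ℝ) 1 := by
      rw [Set.mem_Icc]; constructor <;> [linarith [neg_abs_le ω]; linarith [le_abs_self ω]]
    have hind : Set.indicator (Set.Icc (-1 : ℝ) 1) (fun _ => K) ω = K :=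
      Set.indicator_of_mem hmem _
    have hrest : 0 ≤ (c * a₁ / 2) * (A₁ ^ 2 / |a₁ * ω|) + (c * a₂ / 2) * (A₂ ^ 2 / |a₂ * ω|) := by
      positivity
    have hgoal : ‖ζ ω‖ * A₁ * A₂ / |ω| ^ (α + 1) ≤ K := by
      rcases eq_or_ne ω 0 with rfl | hω0
      · rw [abs_zero, Real.zero_rpow (by positivity : α + 1 ≠ 0), div_zero]
        exact hK0
      · have hDpos : 0 < |ω| ^ (α + 1) := Real.rpow_pos_of_pos (abs_pos.2 hω0) _
        have hnum : ‖ζ ω‖ * A₁ * A₂ ≤ K * ω ^ 4 := by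
          have h₁ := hb₁
          have h₂ := hb₂
          have e : K * ω ^ 4 = (c * (Cψ * (a₁ * ω) ^ 2)) * (Cψ * (a₂ * ω) ^ 2) := by
            rw [hK]; ring
          rw [e]
          have step1 : ‖ζ ω‖ * A₁ ≤ c * (Cψ * (a₁ * ω) ^ 2) :=
            mul_le_mul (hζ ω) h₁ hA₁0 hc
          exact mul_le_mul step1 h₂ hA₂0 (mul_nonneg hc (mul_nonneg hCψ0 (sq_nonneg _)))
        have hfrac : ω ^ 4 / |ω| ^ (α + 1) ≤ 1 := by
          have h4 : ω ^ 4 = |ω| ^ ((4 : ℕ) : ℝ) := by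
            rw [Real.rpow_natCast, ← _root_.abs_pow, _root_.abs_of_nonneg (by positivity : (0:ℝ) ≤ ω ^ 4)]
          rw [h4, ← Real.rpow_sub (abs_pos.2 hω0)]
          exact Real.rpow_le_one (abs_nonneg ω) hω (by push_cast; linarith)
        calc ‖ζ ω‖ * A₁ * A₂ / |ω| ^ (α + 1)
            ≤ K * ω ^ 4 / |ω| ^ (α + 1) :=
              div_le_div₀ (mul_nonneg hK0 (by positivity)) hnum hDpos le_rfl
          _ = K * (ω ^ 4 / |ω| ^ (α + 1)) := by ring
          _ ≤ K * 1 := by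
              exact mul_le_mul_of_nonneg_left hfrac hK0
          _ = K := mul_one K
    simp only [hB, hind]
    rw [← hA₁, ← hA₂]
    linarith
  · -- large ω : use Cauchy–Schwarz and the admissibility condition
    have hω0 : (0 : ℝ) < |ω| := by linarith
    have hD : |ω| ≤ |ω| ^ (α + 1) := by
      nth_rewrite 1 [← Real.rpow_one |ω|]
      exact Real.rpow_le_rpow_of_exponent_le hω.le (by linarith)
    have hAB : A₁ * A₂ ≤ (A₁ ^ 2 + A₂ ^ 2) / 2 := by nlinarith [sq_nonneg (A₁ - A₂)]
    have hnum : ‖ζ ω‖ * A₁ * A₂ ≤ c * (A₁ ^ 2 + A₂ ^ 2) / 2 := by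
      calc ‖ζ ω‖ * A₁ * A₂ = ‖ζ ω‖ * (A₁ * A₂) := by ring
        _ ≤ c * ((A₁ ^ 2 + A₂ ^ 2) / 2) :=
            mul_le_mul (hζ ω) hAB (mul_nonneg hA₁0 hA₂0) hc
        _ = c * (A₁ ^ 2 + A₂ ^ 2) / 2 := by ring
    have h1 : ‖ζ ω‖ * A₁ * A₂ / |ω| ^ (α + 1)
        ≤ (c * (A₁ ^ 2 + A₂ ^ 2) / 2) / |ω| :=
      div_le_div₀ (div_nonneg (mul_nonneg hc (add_nonneg (sq_nonneg _) (sq_nonneg _)))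
        (by norm_num)) hnum hω0 hD
    have h2 : (c * (A₁ ^ 2 + A₂ ^ 2) / 2) / |ω|
        = (c * a₁ / 2) * (A₁ ^ 2 / |a₁ * ω|) + (c * a₂ / 2) * (A₂ ^ 2 / |a₂ * ω|) := by
      rw [abs_mul, abs_mul, _root_.abs_of_pos ha₁, _root_.abs_of_pos ha₂]
      exact split_aux c a₁ a₂ A₁ A₂ |ω| ha₁.ne' ha₂.ne' (ne_of_gt hω0)
    have hind : Set.indicator (Set.Icc (-1 : ℝ) 1) (fun _ => K) ω = 0 := by
      apply Set.indicator_of_notMem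
      rw [Set.mem_Icc]
      intro ⟨hl, hr⟩
      have : |ω| ≤ 1 := abs_le.2 ⟨hl, hr⟩
      linarith
    simp only [hB, hind]
    rw [← hA₁, ← hA₂, zero_add, ← h2]
    exact h1
end
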